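/- For every nonnegative integer n and every real number ℓ, the sum over i + j = n of C(2i - ℓ, i) * C(2j + ℓ, j) equals 4^n. -/

import Mathlib

/-- Generalized binomial coefficient for a real upper argument. -/
noncomputable def gchoose (x : ℝ) (k : ℕ) : ℝ :=
  (descPochhammer ℝ k).eval x / k.factorial

open Finset Polynomial in
private lemma gchoose_zero' (x : ℝ) : gchoose x 0 = 1 := by
  simp [gchoose]

open Finset Polynomial

private lemma desc_succ_left (k : ℕ) (x : ℝ) :
    (descPochhammer ℝ (k + 1)).eval x = x * (descPochhammer ℝ k).eval (x - 1) := by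
  rw [descPochhammer_succ_left]
  simp [eval_comp]

private lemma gchoose_pascal (x : ℝ) (k : ℕ) :
    gchoose x (k + 1) = gchoose (x - 1) (k + 1) + gchoose (x - 1) k := by
  unfold gchoose
  rw [desc_succ_left, descPochhammer_succ_eval]
  have hk : (k.factorial : ℝ) ≠ 0 := Nat.cast_ne_zero.mpr k.factorial_ne_zero
  have hk1 : ((k + 1).factorial : ℝ) = (k + 1) * k.factorial := by
    push_cast [Nat.factorial_succ]; ring
  rw [hk1]
  have h1 : ((k : ℝ) + 1) ≠ 0 := by positivity
  field_simp
  ring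

/-- The main sum, with an extra shift parameter `s`. -/
noncomputable def T (n : ℕ) (s ℓ : ℝ) : ℝ :=
  ∑ ij ∈ Finset.HasAntidiagonal.antidiagonal n, gchoose (2 * ij.1 - ℓ) ij.1 * gchoose (2 * ij.2 + ℓ + s) ij.2

private lemma T_zero (s ℓ : ℝ) : T 0 s ℓ = 1 := by
  simp [T, gchoose_zero']


private lemma T_R1 (n : ℕ) (s ℓ : ℝ) :
    T (n + 1) s ℓ = T (n + 1) (s - 1) ℓ + T n (s + 1) ℓ := by
  unfold T
  rw [Finset.Nat.sum_antidiagonal_succ'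
    (f := fun p : ℕ × ℕ => gchoose (2 * p.1 - ℓ) p.1 * gchoose (2 * p.2 + ℓ + s) p.2),
    Finset.Nat.sum_antidiagonal_succ'
    (f := fun p : ℕ × ℕ => gchoose (2 * p.1 - ℓ) p.1 * gchoose (2 * p.2 + ℓ + (s - 1)) p.2)]
  simp only [gchoose_zero', mul_one]
  have hterm : ∀ p ∈ antidiagonal n,
      gchoose (2 * ((p.1:ℕ):ℝ) - ℓ) p.1 * gchoose (2 * ((p.2 + 1 : ℕ):ℝ) + ℓ + s) (p.2 + 1)
      = gchoose (2 * ((p.1:ℕ):ℝ) - ℓ) p.1 * gchoose (2 * ((p.2 + 1 : ℕ):ℝ) + ℓ + (s - 1)) (p.2 + 1)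
        + gchoose (2 * ((p.1:ℕ):ℝ) - ℓ) p.1 * gchoose (2 * ((p.2:ℕ):ℝ) + ℓ + (s + 1)) p.2 := by
    intro p _
    have h := gchoose_pascal (2 * ((p.2 : ℝ) + 1) + ℓ + s) p.2
    have e1 : 2 * ((p.2:ℝ) + 1) + ℓ + (s - 1) = 2 * ((p.2 : ℝ) + 1) + ℓ + s - 1 := by ring
    have e2 : 2 * (p.2:ℝ) + ℓ + (s + 1) = 2 * ((p.2 : ℝ) + 1) + ℓ + s - 1 := by ring
    push_cast
    rw [e1, e2, h]
    ring
  rw [Finset.sum_congr rfl hterm, Finset.sum_add_distrib]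
  ring

private lemma T_R2 (n : ℕ) (s ℓ : ℝ) :
    T (n + 1) s ℓ = T (n + 1) (s - 1) (ℓ + 1) + T n (s + 1) (ℓ - 1) := by
  unfold T
  rw [Finset.Nat.sum_antidiagonal_succ
    (f := fun p : ℕ × ℕ => gchoose (2 * p.1 - ℓ) p.1 * gchoose (2 * p.2 + ℓ + s) p.2),
    Finset.Nat.sum_antidiagonal_succ
    (f := fun p : ℕ × ℕ => gchoose (2 * p.1 - (ℓ+1)) p.1 * gchoose (2 * p.2 + (ℓ+1) + (s - 1)) p.2)]
  simp only [gchoose_zero', one_mul]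
  have hterm : ∀ p ∈ antidiagonal n,
      gchoose (2 * ((p.1 + 1:ℕ):ℝ) - ℓ) (p.1 + 1) * gchoose (2 * ((p.2:ℕ):ℝ) + ℓ + s) p.2
      = gchoose (2 * ((p.1 + 1:ℕ):ℝ) - (ℓ+1)) (p.1 + 1) * gchoose (2 * ((p.2:ℕ):ℝ) + (ℓ+1) + (s - 1)) p.2
        + gchoose (2 * ((p.1:ℕ):ℝ) - (ℓ-1)) p.1 * gchoose (2 * ((p.2:ℕ):ℝ) + (ℓ-1) + (s + 1)) p.2 := by
    intro p _
    have h := gchoose_pascal (2 * ((p.1 : ℝ) + 1) - ℓ) p.1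
    have e1 : 2 * ((p.1:ℝ) + 1) - (ℓ + 1) = 2 * ((p.1 : ℝ) + 1) - ℓ - 1 := by ring
    have e2 : 2 * (p.1:ℝ) - (ℓ - 1) = 2 * ((p.1 : ℝ) + 1) - ℓ - 1 := by ring
    have e3 : 2 * ((p.2:ℝ)) + (ℓ+1) + (s - 1) = 2 * ((p.2 : ℝ)) + ℓ + s := by ring
    have e4 : 2 * ((p.2:ℝ)) + (ℓ-1) + (s + 1) = 2 * ((p.2 : ℝ)) + ℓ + s := by ring
    push_cast
    rw [e1, e2, e3, e4, h]
    ring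
  rw [Finset.sum_congr rfl hterm, Finset.sum_add_distrib]
  have hb : 2 * (((n + 1:ℕ)):ℝ) + (ℓ + 1) + (s - 1) = 2 * (((n + 1:ℕ)):ℝ) + ℓ + s := by push_cast; ring
  rw [hb]
  ring

/-- A real polynomial whose evaluation at `ℓ` is `T n s ℓ`. -/
noncomputable def Tpoly (n : ℕ) (s : ℝ) : Polynomial ℝ :=
  ∑ ij ∈ Finset.HasAntidiagonal.antidiagonal n,
    Polynomial.C ((ij.1.factorial * ij.2.factorial : ℝ))⁻¹ *
      ((descPochhammer ℝ ij.1).comp (Polynomial.C ((2 * ij.1 : ℕ) : ℝ) - Polynomial.X) *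
       (descPochhammer ℝ ij.2).comp (Polynomial.C (((2 * ij.2 : ℕ) : ℝ) + s) + Polynomial.X))

private lemma Tpoly_eval (n : ℕ) (s ℓ : ℝ) : (Tpoly n s).eval ℓ = T n s ℓ := by
  unfold Tpoly T
  rw [Polynomial.eval_finset_sum]
  refine Finset.sum_congr rfl fun p _ => ?_
  have h1 : (p.1.factorial : ℝ) ≠ 0 := Nat.cast_ne_zero.mpr p.1.factorial_ne_zero
  have h2 : (p.2.factorial : ℝ) ≠ 0 := Nat.cast_ne_zero.mpr p.2.factorial_ne_zero
  simp only [eval_mul, eval_C, eval_comp, eval_sub, eval_add, eval_X]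
  push_cast
  rw [show 2 * (p.2:ℝ) + s + ℓ = 2 * (p.2:ℝ) + ℓ + s by ring]
  unfold gchoose
  field_simp


private lemma poly_const_of_shift (P : Polynomial ℝ) (h : ∀ x : ℝ, P.eval (x + 1) = P.eval x) :
    ∀ x y : ℝ, P.eval x = P.eval y := by
  have hm : ∀ m : ℕ, P.eval (m : ℝ) = P.eval 0 := by
    intro m
    induction m with
    | zero => norm_num
    | succ k ih => push_cast; rw [h k, ih]
  have hQ : P - Polynomial.C (P.eval 0) = 0 := by
    apply Polynomial.eq_zero_of_infinite_isRoot
    apply Set.Infinite.mono (s := Set.range ((↑) : ℕ → ℝ))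
    · rintro x ⟨m, rfl⟩
      simp [Polynomial.IsRoot, hm m]
    · exact Set.infinite_range_of_injective Nat.cast_injective
  have hx : ∀ x : ℝ, P.eval x = P.eval 0 := by
    intro x
    have := congrArg (Polynomial.eval x) hQ
    simpa [sub_eq_zero] using this
  intro x y; rw [hx x, hx y]

private lemma Tpoly_spec (n : ℕ) (s : ℝ) : ∃ P : Polynomial ℝ, ∀ ℓ, P.eval ℓ = T n s ℓ :=
  ⟨Tpoly n s, fun ℓ => Tpoly_eval n s ℓ⟩

private lemma T_const : ∀ n : ℕ, ∀ s ℓ₁ ℓ₂ : ℝ, T n s ℓ₁ = T n s ℓ₂ := by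
  intro n
  induction n with
  | zero => intro s ℓ₁ ℓ₂; simp [T, gchoose_zero']
  | succ n ih =>
    have key : ∀ s ℓ : ℝ, T (n + 1) s ℓ = T (n + 1) s (ℓ + 1) := by
      intro s ℓ
      have h1 := T_R1 n (s + 1) ℓ
      have h2 := T_R2 n (s + 1) ℓ
      have h3 : T n (s + 1 + 1) ℓ = T n (s + 1 + 1) (ℓ - 1) := ih _ _ _
      have h4 : s + 1 - 1 = s := by ring
      rw [h4] at h1 h2
      linarith
    intro s ℓ₁ ℓ₂
    obtain ⟨P, hP⟩ := Tpoly_spec (n + 1) s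
    rw [← hP, ← hP]
    exact poly_const_of_shift P (fun x => by rw [hP, hP, key s x]) ℓ₁ ℓ₂

-- L2 : gchoose (2m+1) m = (1/2) gchoose (2m+2) (m+1)
private lemma gchoose_half_snd (m : ℕ) :
    gchoose (2 * (m:ℝ) + 1) m = gchoose (2 * (m:ℝ) + 2) (m + 1) / 2 := by
  unfold gchoose
  rw [desc_succ_left m (2 * (m:ℝ) + 2)]
  have hm : ((m + 1).factorial : ℝ) = (m + 1) * m.factorial := by
    push_cast [Nat.factorial_succ]; ring
  rw [hm, show 2 * (m:ℝ) + 2 - 1 = 2 * (m:ℝ) + 1 by ring]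
  have h1 : (m.factorial : ℝ) ≠ 0 := Nat.cast_ne_zero.mpr m.factorial_ne_zero
  have h2 : ((m:ℝ) + 1) ≠ 0 := by positivity
  field_simp

-- L3 : gchoose (2(i+1) - 1) (i+1) = (1/2) gchoose (2(i+1)) (i+1)
private lemma gchoose_half_fst (i : ℕ) :
    gchoose (2 * ((i:ℝ) + 1) - 1) (i + 1) = gchoose (2 * ((i:ℝ) + 1)) (i + 1) / 2 := by
  unfold gchoose
  rw [desc_succ_left i (2 * ((i:ℝ) + 1)),
      descPochhammer_succ_eval]
  rw [show 2 * ((i:ℝ) + 1) - 1 - (i:ℝ) = (i:ℝ) + 1 by ring,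
      show 2 * ((i:ℝ) + 1) - 1 = 2 * (i:ℝ) + 1 by ring]
  have h1 : (((i+1).factorial) : ℝ) ≠ 0 := Nat.cast_ne_zero.mpr (i+1).factorial_ne_zero
  field_simp

private lemma gchoose_half_fst' (i : ℕ) :
    gchoose (2 * (i:ℝ) - 1) i = gchoose (2 * (i:ℝ)) i / 2 + (if i = 0 then (1:ℝ)/2 else 0) := by
  cases i with
  | zero => simp [gchoose_zero']; norm_num
  | succ k =>
    have := gchoose_half_fst k
    push_cast
    rw [this]
    simp

private lemma T_step (n : ℕ) : T (n + 1) 0 0 = 4 * T n 0 1 := by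
  unfold T
  rw [Finset.Nat.sum_antidiagonal_succ'
    (f := fun p : ℕ × ℕ => gchoose (2 * p.1 - 0) p.1 * gchoose (2 * p.2 + 0 + 0) p.2)]
  rw [Finset.mul_sum]
  have hterm : ∀ p ∈ antidiagonal n,
      4 * (gchoose (2 * ((p.1:ℕ):ℝ) - 1) p.1 * gchoose (2 * ((p.2:ℕ):ℝ) + 1 + 0) p.2)
      = gchoose (2 * ((p.1:ℕ):ℝ) - 0) p.1 * gchoose (2 * ((p.2 + 1:ℕ):ℝ) + 0 + 0) (p.2 + 1)
        + (if p.1 = 0 then gchoose (2 * ((p.2:ℕ):ℝ) + 2) (p.2 + 1) else 0) := by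
    intro p _
    have h2 : gchoose (2 * ((p.2:ℕ):ℝ) + 1) p.2 = gchoose (2 * ((p.2:ℕ):ℝ) + 2) (p.2 + 1) / 2 :=
      gchoose_half_snd p.2
    have h1 := gchoose_half_fst' p.1
    push_cast
    rw [show 2 * ((p.2:ℝ)) + 1 + 0 = 2 * (p.2:ℝ) + 1 by ring, h2, h1,
        show 2 * ((p.1:ℝ)) - 0 = 2 * (p.1:ℝ) by ring,
        show 2 * ((p.2:ℝ) + 1) + 0 + 0 = 2 * (p.2:ℝ) + 2 by ring]
    by_cases hp : p.1 = 0
    · simp only [hp, if_pos]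
      norm_num [hp]
      ring
    · simp only [hp, if_neg, if_false]
      ring
  rw [Finset.sum_congr rfl hterm, Finset.sum_add_distrib]
  have hif : ∑ p ∈ antidiagonal n,
      (if p.1 = 0 then gchoose (2 * ((p.2:ℕ):ℝ) + 2) (p.2 + 1) else 0)
      = gchoose (2 * ((n:ℕ):ℝ) + 2) (n + 1) := by
    rw [Finset.sum_eq_single_of_mem (0, n) (by simp)]
    · simp
    · intro p hp hne
      have : p.1 ≠ 0 := by
        intro h0
        apply hne
        have h := Finset.HasAntidiagonal.mem_antidiagonal.mp hp
        rw [h0, zero_add] at h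
        exact Prod.ext h0 h
      simp [this]
  rw [hif]
  have hb : gchoose (2 * (((n+1:ℕ)):ℝ) - 0) (n + 1) * gchoose (2 * ((0:ℕ):ℝ) + 0 + 0) 0
      = gchoose (2 * ((n:ℕ):ℝ) + 2) (n + 1) := by
    rw [gchoose_zero']
    push_cast
    rw [show 2 * ((n:ℝ) + 1) - 0 = 2 * (n:ℝ) + 2 by ring]
    ring
  rw [hb]
  ring

private lemma T_value : ∀ n : ℕ, T n 0 0 = 4 ^ n := by
  intro n
  induction n with
  | zero => simp [T_zero]
  | succ k ih =>
    rw [T_step k, T_const k 0 1 0, ih]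
    ring

theorem generalized_convolution (n : ℕ) (ℓ : ℝ) :
    ∑ ij ∈ Finset.HasAntidiagonal.antidiagonal n,
      gchoose (2 * ij.1 - ℓ) ij.1 * gchoose (2 * ij.2 + ℓ) ij.2 = 4 ^ n := by
  have h : ∑ ij ∈ Finset.HasAntidiagonal.antidiagonal n,
      gchoose (2 * ij.1 - ℓ) ij.1 * gchoose (2 * ij.2 + ℓ) ij.2 = T n 0 ℓ := by
    unfold T
    refine Finset.sum_congr rfl fun p _ => ?_
    rw [add_zero]
  rw [h, T_const n 0 ℓ 0, T_value]
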